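/- Let n_x, n_y ≥ 1, p > 0, a ∈ ℝ with a ≠ 0, g ≥ 0 and h ≥ 0. For κ ∈ ℝ and x ∈ ℝ^{n_x}, y ∈ ℝ^{n_y} define ρ_κ(x,y) := −p‖x‖² − 2a‖x‖‖y‖ − κ‖y‖² + g‖x‖ + h‖y‖. Then for every κ > p/3 + 3a²/p there exist a constant c > 0 and a strictly increasing continuous function r : (0, 1/(p/3 + 3a²/p)) → (0,∞) with r(σ) → 0 as σ → 0⁺, both depending only on p and a, such that for all x, y: if ‖x‖² + ‖y‖² > max( c g², h² r(1/κ) ), then ρ_κ(x,y) ≤ −(p/3)(‖x‖² + ‖y‖²). -/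

import Mathlib

set_option maxHeartbeats 1000000 in
/-- the technical Lemma 2 (Appendix A). The constant `c` and the
class-`K` function `r` depend only on `p` and `a` (they are chosen before
`g`, `h` and `κ`). -/
theorem stmt_5 (nx ny : ℕ) (hnx : 1 ≤ nx) (hny : 1 ≤ ny)
    (p a : ℝ) (hp : 0 < p) (ha : a ≠ 0) :
    ∃ c > (0:ℝ), ∃ r : ℝ → ℝ,
      StrictMonoOn r (Set.Ioo 0 (1 / (p / 3 + 3 * a ^ 2 / p))) ∧
      ContinuousOn r (Set.Ioo 0 (1 / (p / 3 + 3 * a ^ 2 / p))) ∧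
      (∀ σ ∈ Set.Ioo (0:ℝ) (1 / (p / 3 + 3 * a ^ 2 / p)), 0 < r σ) ∧
      Filter.Tendsto r (nhdsWithin 0 (Set.Ioi 0)) (nhds 0) ∧
      ∀ g ≥ (0:ℝ), ∀ h ≥ (0:ℝ), ∀ κ : ℝ, p / 3 + 3 * a ^ 2 / p < κ →
        ∀ (x : EuclideanSpace ℝ (Fin nx)) (y : EuclideanSpace ℝ (Fin ny)),
          max (c * g ^ 2) (h ^ 2 * r (1 / κ)) < ‖x‖ ^ 2 + ‖y‖ ^ 2 →
          -p * ‖x‖ ^ 2 - 2 * a * ‖x‖ * ‖y‖ - κ * ‖y‖ ^ 2 + g * ‖x‖ + h * ‖y‖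
            ≤ -(p / 3) * (‖x‖ ^ 2 + ‖y‖ ^ 2) := by
  have ha2 : 0 < a ^ 2 := by positivity
  set K0 : ℝ := p / 3 + 3 * a ^ 2 / p with hK0def
  have hK0 : 0 < K0 := by rw [hK0def]; positivity
  set L : ℝ := 3 * a ^ 2 * p / (2 * p ^ 2 + 9 * a ^ 2) with hLdef
  have hL : 0 < L := by rw [hLdef]; positivity
  clear_value K0 L
  refine ⟨4 / L ^ 2, by positivity, fun σ => σ / (2 * L * (1 - K0 * σ)), ?_, ?_, ?_, ?_, ?_⟩
  · -- strict mono
    intro s hs t ht hst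
    have hs2 : s * K0 < 1 := by
      have := hs.2
      rw [lt_div_iff₀ hK0] at this
      exact this
    have ht2 : t * K0 < 1 := by
      have := ht.2
      rw [lt_div_iff₀ hK0] at this
      exact this
    have hds : 0 < 2 * L * (1 - K0 * s) := by nlinarith
    have hdt : 0 < 2 * L * (1 - K0 * t) := by nlinarith
    simp only
    rw [div_lt_div_iff₀ hds hdt]
    have hs0 := hs.1
    nlinarith [hs.1, ht.1]
  · -- continuity
    apply ContinuousOn.div continuous_id.continuousOn (by fun_prop)
    intro s hs
    have hs2 : s * K0 < 1 := by
      have := hs.2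
      rw [lt_div_iff₀ hK0] at this
      exact this
    have : 0 < 2 * L * (1 - K0 * s) := by nlinarith
    exact ne_of_gt this
  · -- positivity
    intro s hs
    have hs2 : s * K0 < 1 := by
      have := hs.2
      rw [lt_div_iff₀ hK0] at this
      exact this
    have : 0 < 2 * L * (1 - K0 * s) := by nlinarith
    exact div_pos hs.1 this
  · -- tendsto 0
    have hc : ContinuousAt (fun σ : ℝ => σ / (2 * L * (1 - K0 * σ))) 0 := by
      apply ContinuousAt.div continuousAt_id (by fun_prop)
      norm_num
      positivity
    have h2 : Filter.Tendsto (fun σ : ℝ => σ / (2 * L * (1 - K0 * σ)))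
        (nhdsWithin 0 (Set.Ioi 0)) (nhds (0 / (2 * L * (1 - K0 * 0)))) :=
      hc.tendsto.mono_left nhdsWithin_le_nhds
    simpa using h2
  · -- main estimate
    intro g hg h hh κ hκ x y hmax
    obtain ⟨E, hE, rfl⟩ : ∃ E, 0 < E ∧ κ = K0 + E := ⟨κ - K0, by linarith, by ring⟩
    rw [max_lt_iff] at hmax
    obtain ⟨hA, hB⟩ := hmax
    have hκ0 : (0:ℝ) < K0 + E := by positivity
    have hrval : (1 / (K0 + E)) / (2 * L * (1 - K0 * (1 / (K0 + E)))) = 1 / (2 * L * E) := by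
      have h1 : (K0 + E) ≠ 0 := ne_of_gt hκ0
      have h2 : 1 - K0 * (1 / (K0 + E)) = E / (K0 + E) := by
        field_simp
        ring
      rw [h2]
      rw [show 2 * L * (E / (K0 + E)) = 2 * L * E / (K0 + E) by ring]
      rw [div_div_div_cancel_right₀]
      exact h1
    simp only [hrval] at hB
    -- convert the two smallness conditions
    rw [div_mul_eq_mul_div, div_lt_iff₀ (by positivity : (0:ℝ) < L ^ 2)] at hA
    rw [mul_one_div, div_lt_iff₀ (by positivity : (0:ℝ) < 2 * L * E)] at hB
    have hX : (0:ℝ) ≤ ‖x‖ := norm_nonneg x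
    have hY : (0:ℝ) ≤ ‖y‖ := norm_nonneg y
    have poly : 9 * a ^ 2 * p ^ 2 * (‖x‖ ^ 2 + ‖y‖ ^ 2)
        ≤ (2 * p ^ 2 + 9 * a ^ 2) *
          (2 * p ^ 2 * ‖x‖ ^ 2 + 6 * a * p * ‖x‖ * ‖y‖ + 9 * a ^ 2 * ‖y‖ ^ 2) := by
      nlinarith [sq_nonneg (p ^ 2 * (4 * p ^ 2 + 9 * a ^ 2) * ‖x‖
          + 3 * a * p * (2 * p ^ 2 + 9 * a ^ 2) * ‖y‖),
        sq_nonneg (9 * a ^ 2 * p ^ 2 * ‖y‖),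
        show (0:ℝ) < p ^ 2 * (4 * p ^ 2 + 9 * a ^ 2) by positivity]
    have stepC : L * (‖x‖ ^ 2 + ‖y‖ ^ 2)
        ≤ 2 * p / 3 * ‖x‖ ^ 2 + 2 * a * ‖x‖ * ‖y‖ + 3 * a ^ 2 / p * ‖y‖ ^ 2 := by
      rw [hLdef, div_mul_eq_mul_div, div_le_iff₀ (by positivity : (0:ℝ) < 2 * p ^ 2 + 9 * a ^ 2)]
      have h3 : 2 * p / 3 * ‖x‖ ^ 2 + 2 * a * ‖x‖ * ‖y‖ + 3 * a ^ 2 / p * ‖y‖ ^ 2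
          = (2 * p ^ 2 * ‖x‖ ^ 2 + 6 * a * p * ‖x‖ * ‖y‖ + 9 * a ^ 2 * ‖y‖ ^ 2) / (3 * p) := by
        field_simp
        ring
      rw [h3, div_mul_eq_mul_div, le_div_iff₀ (by positivity : (0:ℝ) < 3 * p)]
      nlinarith [poly, hp]
    have stepA : g * ‖x‖ ≤ L / 2 * (‖x‖ ^ 2 + ‖y‖ ^ 2) := by
      nlinarith [sq_nonneg (L * ‖x‖ - 2 * g), hA, hL, sq_nonneg (L * ‖y‖)]
    have stepB : h * ‖y‖ ≤ E * ‖y‖ ^ 2 + L / 2 * (‖x‖ ^ 2 + ‖y‖ ^ 2) := by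
      nlinarith [sq_nonneg (2 * E * ‖y‖ - h), hB, hE, hL]
    rw [hK0def]
    nlinarith [stepA, stepB, stepC]
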